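/- Let n ≥ 1 and p > 1 and consider the graded commutative ring A = ℤ[x1, x2]/(x1^(p+1), x2·(n·x1 + x2)) with deg x1 = deg x2 = 2. Then for integers n, n' ≥ 0, the rings ℤ[x1, x2]/(x1^(p+1), x2·(n·x1 + x2)) and ℤ[x1, x2]/(x1^(p+1), x2·(n'·x1 + x2)) are isomorphic as graded rings if and only if n' = n (for n, n' ≥ 0: they are isomorphic iff |n'| = |n|). -/

import Mathlib

open MvPolynomial

/-- The cohomology ring `A n = ℤ[x₁,x₂]/(x₁^{p+1}, x₂(n·x₁+x₂))` of `S_n = P(O ⊕ O(n))`. -/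
def cohRing (p n : ℕ) : Type :=
  MvPolynomial (Fin 2) ℤ ⧸
    Ideal.span ({X 0 ^ (p + 1), X 1 * ((n : MvPolynomial (Fin 2) ℤ) * X 0 + X 1)} :
      Set (MvPolynomial (Fin 2) ℤ))

noncomputable instance (p n : ℕ) : CommRing (cohRing p n) :=
  inferInstanceAs (CommRing (_ ⧸ _))

/-- The degree-2 component of `cohRing p n`, spanned by the classes of `x₁` and `x₂`. -/
noncomputable def degTwo (p n : ℕ) : Submodule ℤ (cohRing p n) :=
  Submodule.span ℤ
    {Ideal.Quotient.mk _ (X 0 : MvPolynomial (Fin 2) ℤ),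
     Ideal.Quotient.mk _ (X 1 : MvPolynomial (Fin 2) ℤ)}

/-- recursive coefficient sequence -/
def gSeq (a b k : ℤ) : ℕ → ℤ
  | 0 => 0
  | (m+1) => (a - k*b) * gSeq a b k m + b * a^m

lemma gSeq_mul (a b k : ℤ) (m : ℕ) : k * gSeq a b k m = a^m - (a - k*b)^m := by
  induction m with
  | zero => simp [gSeq]
  | succ m ih =>
    rw [gSeq]
    linear_combination (a - k*b) * ih

lemma gSeq_zero (a b : ℤ) (m : ℕ) : gSeq a b 0 (m+1) = (m+1) * a^m * b := by
  induction m with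
  | zero => simp [gSeq]
  | succ m ih =>
    rw [gSeq, ih]
    push_cast
    ring

abbrev Rmod (p : ℕ) := AdjoinRoot ((Polynomial.X : Polynomial ℤ)^(p+1))

noncomputable abbrev tR (p : ℕ) : Rmod p := AdjoinRoot.root _

noncomputable def fpoly (p k : ℕ) : Polynomial (Rmod p) :=
  Polynomial.X^2 + Polynomial.C ((k : Rmod p) * tR p) * Polynomial.X

instance (p : ℕ) : Nontrivial (Rmod p) :=
  AdjoinRoot.nontrivial _ (by rw [Polynomial.degree_X_pow]; exact_mod_cast Nat.succ_ne_zero p)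

lemma fpoly_deg_lt (p k : ℕ) :
    (Polynomial.C ((k : Rmod p) * tR p) * Polynomial.X).degree
      < ((Polynomial.X : Polynomial (Rmod p))^2).degree := by
  refine lt_of_le_of_lt (Polynomial.degree_C_mul_X_le _) ?_
  rw [Polynomial.degree_X_pow]
  norm_cast

lemma fpoly_monic (p k : ℕ) : (fpoly p k).Monic :=
  (Polynomial.monic_X_pow 2).add_of_left (fpoly_deg_lt p k)

lemma fpoly_natDegree (p k : ℕ) : (fpoly p k).natDegree = 2 := by
  have h : (fpoly p k).degree = 2 := by
    rw [fpoly, Polynomial.degree_add_eq_left_of_degree_lt (fpoly_deg_lt p k),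
      Polynomial.degree_X_pow]
    norm_cast
  exact Polynomial.natDegree_eq_of_degree_eq_some h

abbrev Bmod (p k : ℕ) := AdjoinRoot (fpoly p k)

noncomputable abbrev yB (p k : ℕ) : Bmod p k := AdjoinRoot.root _

noncomputable abbrev tB (p k : ℕ) : Bmod p k := algebraMap (Rmod p) _ (tR p)

lemma tR_pow (p : ℕ) : tR p ^ (p+1) = 0 := by
  rw [tR, ← AdjoinRoot.mk_X, ← map_pow, AdjoinRoot.mk_self]

lemma tB_pow (p k : ℕ) : tB p k ^ (p+1) = 0 := by
  rw [tB, ← map_pow, tR_pow, map_zero]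

lemma yB_rel (p k : ℕ) :
    yB p k * yB p k = -((k : Bmod p k) * tB p k * yB p k) := by
  have h : Polynomial.aeval (yB p k) (fpoly p k) = 0 := by
    rw [AdjoinRoot.aeval_eq, AdjoinRoot.mk_self]
  replace h : Polynomial.aeval (yB p k)
      (Polynomial.X^2 + Polynomial.C ((k : Rmod p) * tR p) * Polynomial.X) = 0 := h
  simp only [map_add, map_mul, map_pow, Polynomial.aeval_X, Polynomial.aeval_C,
    map_natCast] at h
  linear_combination h

noncomputable def bR (p : ℕ) : Module.Basis (Fin (p+1)) ℤ (Rmod p) :=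
  ((AdjoinRoot.powerBasis' (Polynomial.monic_X_pow (p+1))).basis).reindex
    (finCongr (by simp))

lemma bR_apply (p : ℕ) (i : Fin (p+1)) : bR p i = tR p ^ (i : ℕ) := by
  rw [bR, Module.Basis.reindex_apply]
  rw [PowerBasis.basis_eq_pow]
  simp [AdjoinRoot.powerBasis']
  rfl

noncomputable def bY (p k : ℕ) : Module.Basis (Fin 2) (Rmod p) (Bmod p k) :=
  ((AdjoinRoot.powerBasis' (fpoly_monic p k)).basis).reindex
    (finCongr (by rw [AdjoinRoot.powerBasis'_dim, fpoly_natDegree]))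

lemma bY_apply (p k : ℕ) (j : Fin 2) : bY p k j = yB p k ^ (j : ℕ) := by
  rw [bY, Module.Basis.reindex_apply, PowerBasis.basis_eq_pow]
  simp [AdjoinRoot.powerBasis']
  rfl

noncomputable def bB (p k : ℕ) : Module.Basis (Fin (p+1) × Fin 2) ℤ (Bmod p k) :=
  (bR p).smulTower (bY p k)

lemma bB_apply (p k : ℕ) (i : Fin (p+1)) (j : Fin 2) :
    bB p k (i, j) = tB p k ^ (i : ℕ) * yB p k ^ (j : ℕ) := by
  rw [bB, Module.Basis.smulTower_apply, bR_apply, bY_apply, Algebra.smul_def, map_pow]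

lemma coord_two {ι M : Type*} [AddCommGroup M] [Module ℤ M] (b : Module.Basis ι ℤ M)
    {i j : ι} (hij : i ≠ j) {α β : ℤ} (h : α • b i + β • b j = 0) : α = 0 ∧ β = 0 := by
  have h' := congrArg b.repr h
  simp only [map_add, map_smul, Module.Basis.repr_self, map_zero] at h'
  constructor
  · have := DFunLike.congr_fun h' i
    simpa [Finsupp.single_apply, hij, (Ne.symm hij)] using this
  · have := DFunLike.congr_fun h' j
    simpa [Finsupp.single_apply, hij, (Ne.symm hij)] using this

/-- independence of two distinct monomials `t^i y^j` in `Bmod`. -/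
lemma indep_two (p k : ℕ) {i₁ j₁ i₂ j₂ : ℕ} (hi₁ : i₁ ≤ p) (hj₁ : j₁ ≤ 1)
    (hi₂ : i₂ ≤ p) (hj₂ : j₂ ≤ 1) (hne : i₁ ≠ i₂ ∨ j₁ ≠ j₂) {α β : ℤ}
    (h : α • (tB p k ^ i₁ * yB p k ^ j₁) + β • (tB p k ^ i₂ * yB p k ^ j₂) = 0) :
    α = 0 ∧ β = 0 := by
  have hb1 := bB_apply p k ⟨i₁, by omega⟩ ⟨j₁, by omega⟩
  have hb2 := bB_apply p k ⟨i₂, by omega⟩ ⟨j₂, by omega⟩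
  refine coord_two (bB p k) (i := (⟨i₁, by omega⟩, ⟨j₁, by omega⟩))
    (j := (⟨i₂, by omega⟩, ⟨j₂, by omega⟩)) ?_ ?_
  · simp only [ne_eq, Prod.mk.injEq, Fin.mk.injEq, not_and]
    intro h1
    rcases hne with h' | h' <;> omega
  · rw [hb1, hb2]; exact h

lemma indep_one (p k : ℕ) {i j : ℕ} (hi : i ≤ p) (hj : j ≤ 1) {α : ℤ}
    (h : α • (tB p k ^ i * yB p k ^ j) = 0) : α = 0 := by
  have hb := bB_apply p k ⟨i, by omega⟩ ⟨j, by omega⟩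
  rw [← hb] at h
  have h' := congrArg (bB p k).repr h
  simp only [map_smul, Module.Basis.repr_self, map_zero] at h'
  have := DFunLike.congr_fun h' (⟨i, by omega⟩, ⟨j, by omega⟩)
  simpa using this

/-- evaluation homomorphism from the cohomology ring to the model. -/
noncomputable def φ (p k : ℕ) : cohRing p k →+* Bmod p k :=
  Ideal.Quotient.lift _
    (MvPolynomial.aeval (R := ℤ) ![tB p k, yB p k]).toRingHom
    (by
      intro a ha
      rw [← RingHom.mem_ker]
      refine Ideal.span_le.mpr ?_ ha
      rintro g (rfl | rfl)
      · simp only [SetLike.mem_coe, RingHom.mem_ker, AlgHom.toRingHom_eq_coe,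
          RingHom.coe_coe, map_pow, aeval_X]
        simp only [Matrix.cons_val_zero]
        exact tB_pow p k
      · simp only [SetLike.mem_coe, RingHom.mem_ker, AlgHom.toRingHom_eq_coe,
          RingHom.coe_coe, map_mul, map_add, aeval_X, map_natCast]
        simp only [Matrix.cons_val_zero, Matrix.cons_val_one, Matrix.head_cons]
        rw [mul_add, yB_rel p k]
        ring)

lemma φ_x (p k : ℕ) : φ p k (Ideal.Quotient.mk _ (X 0)) = tB p k := by
  exact (Ideal.Quotient.lift_mk _ _ _).trans (by simp)

lemma φ_y (p k : ℕ) : φ p k (Ideal.Quotient.mk _ (X 1)) = yB p k := by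
  exact (Ideal.Quotient.lift_mk _ _ _).trans (by simp)

lemma pow_formula (p k : ℕ) (a b : ℤ) (m : ℕ) :
    (a • tB p k + b • yB p k) ^ (m+1)
      = a^(m+1) • tB p k ^ (m+1) + gSeq a b k (m+1) • (tB p k ^ m * yB p k) := by
  induction m with
  | zero =>
    show _ ^ 1 = _
    simp [gSeq]
  | succ m ih =>
    rw [pow_succ, ih]
    have hyy := yB_rel p k
    simp only [zsmul_eq_mul] at *
    rw [show gSeq a b k (m+1+1) = (a - k*b) * gSeq a b k (m+1) + b * a^(m+1) from rfl]
    push_cast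
    linear_combination ((b : Bmod p k) * (gSeq a b k (m+1) : Bmod p k) * tB p k ^ m) * hyy

lemma natAbs_one_of_pow (u a : ℤ) (m : ℕ) (hm : 0 < m) (ha : a = 1 ∨ a = -1)
    (h : a ^ m = u ^ m) : u = 1 ∨ u = -1 := by
  have h1 : u.natAbs ^ m = 1 := by
    have : u.natAbs ^ m = a.natAbs ^ m := by
      rw [← Int.natAbs_pow, ← Int.natAbs_pow, h]
    rcases ha with rfl | rfl <;> simpa using this
  have : u.natAbs = 1 := (pow_eq_one_iff.mp h1).resolve_right (by omega)
  rcases Int.natAbs_eq u with h | h <;> rw [this] at h <;> [left; right] <;> omega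

lemma keyArith (p n n' : ℕ) (a b c d q : ℤ)
    (hdet : (a * d - b * c) * q = 1)
    (hG : gSeq a b (n' : ℤ) (p + 1) = 0)
    (hE2 : c * ((n : ℤ) * a + c) = 0)
    (hE3 : c * ((n : ℤ) * b + d) + d * ((n : ℤ) * a + c)
      - (n' : ℤ) * (d * ((n : ℤ) * b + d)) = 0) :
    n' = n := by
  have hGmul := gSeq_mul a b (n' : ℤ) (p + 1)
  rw [hG, mul_zero] at hGmul
  -- `hGmul : 0 = a^(p+1) - (a - n'*b)^(p+1)`
  by_cases hc : c = 0
  · subst hc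
    have ha1 : a = 1 ∨ a = -1 :=
      Int.isUnit_iff.mp (IsUnit.of_mul_eq_one (a := a) (d * q) (by linear_combination hdet))
    have hd1 : d = 1 ∨ d = -1 :=
      Int.isUnit_iff.mp (IsUnit.of_mul_eq_one (a := d) (a * q) (by linear_combination hdet))
    have hd0 : d ≠ 0 := by rcases hd1 with rfl | rfl <;> omega
    have hnad : (n : ℤ) * a = (n' : ℤ) * ((n : ℤ) * b + d) := by
      apply mul_left_cancel₀ hd0
      linear_combination hE3
    by_cases hn' : (n' : ℤ) = 0
    · rw [hn', zero_mul] at hnad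
      have hn : (n : ℤ) = 0 := by rcases ha1 with rfl | rfl <;> linarith
      omega
    · have hu : a - (n' : ℤ) * b = 1 ∨ a - (n' : ℤ) * b = -1 :=
        natAbs_one_of_pow _ a (p + 1) (Nat.succ_pos p) ha1 (by linarith [hGmul])
      have hb : b = 0 ∨ (n' : ℤ) * b = 2 * a := by
        rcases ha1 with rfl | rfl <;> rcases hu with hu | hu
        · left; rcases mul_eq_zero.mp (show (n' : ℤ) * b = 0 by linarith) with h | h
          · exact absurd h hn'
          · exact h
        · right; linarith
        · right; linarith
        · left; rcases mul_eq_zero.mp (show (n' : ℤ) * b = 0 by linarith) with h | h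
          · exact absurd h hn'
          · exact h
      rcases hb with rfl | hb
      · -- n*a = n'*d
        have : (n : ℤ) * a = (n' : ℤ) * d := by linarith [hnad]
        rcases ha1 with rfl | rfl <;> rcases hd1 with rfl | rfl <;> omega
      · -- n'*d = -n*a
        have : (n' : ℤ) * d = -((n : ℤ) * a) := by linear_combination - hnad - (n : ℤ) * hb
        rcases ha1 with rfl | rfl <;> rcases hd1 with rfl | rfl <;> omega
  · have hnac : (n : ℤ) * a + c = 0 := by
      rcases mul_eq_zero.mp hE2 with h | h
      · exact absurd h hc
      · exact h
    have ha1 : a = 1 ∨ a = -1 :=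
      Int.isUnit_iff.mp (IsUnit.of_mul_eq_one (a := a) ((d + (n : ℤ) * b) * q)
        (by linear_combination hdet + b * q * hnac))
    have hdnb1 : d + (n : ℤ) * b = 1 ∨ d + (n : ℤ) * b = -1 :=
      Int.isUnit_iff.mp (IsUnit.of_mul_eq_one (a * q)
        (by linear_combination hdet + b * q * hnac))
    have hfac : ((n : ℤ) * b + d) * (c - (n' : ℤ) * d) = 0 := by
      linear_combination hE3 - d * hnac
    have hcnd : c = (n' : ℤ) * d := by
      rcases mul_eq_zero.mp hfac with h | h
      · exfalso; rcases hdnb1 with h1 | h1 <;> omega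
      · linarith
    have hnad : (n' : ℤ) * d = -((n : ℤ) * a) := by linarith [hnac, hcnd]
    have hn' : (n' : ℤ) ≠ 0 := by
      intro h; rw [h, zero_mul] at hcnd; exact hc hcnd
    have ha0 : a ≠ 0 := by rcases ha1 with rfl | rfl <;> omega
    have hu : a - (n' : ℤ) * b = 1 ∨ a - (n' : ℤ) * b = -1 :=
      natAbs_one_of_pow _ a (p + 1) (Nat.succ_pos p) ha1 (by linarith [hGmul])
    have hb : b = 0 ∨ (n' : ℤ) * b = 2 * a := by
      rcases ha1 with rfl | rfl <;> rcases hu with hu | hu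
      · left; rcases mul_eq_zero.mp (show (n' : ℤ) * b = 0 by linarith) with h | h
        · exact absurd h hn'
        · exact h
      · right; linarith
      · right; linarith
      · left; rcases mul_eq_zero.mp (show (n' : ℤ) * b = 0 by linarith) with h | h
        · exact absurd h hn'
        · exact h
    have hd1 : d = 1 ∨ d = -1 := by
      rcases hb with rfl | hb
      · rcases hdnb1 with h | h <;> [left; right] <;> linarith
      · -- n*b = -2*d
        have hab : a * ((n : ℤ) * b + 2 * d) = 0 := by
          linear_combination b * hnad - d * hb
        have hnb : (n : ℤ) * b = -2 * d := by
          rcases mul_eq_zero.mp hab with h | h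
          · exact absurd h ha0
          · linarith
        rcases hdnb1 with h | h <;> [right; left] <;> linarith
    rcases ha1 with rfl | rfl <;> rcases hd1 with rfl | rfl <;> omega

/-- Choi–Masuda–Suh cohomological rigidity: for `p > 1` and `n, n' ≥ 0`, the graded rings
`ℤ[x₁,x₂]/(x₁^{p+1}, x₂(n·x₁+x₂))` and `ℤ[x₁,x₂]/(x₁^{p+1}, x₂(n'·x₁+x₂))` (both generators
of degree 2) are isomorphic as graded rings if and only if `n' = n`. -/
theorem stmt14 (p : ℕ) (hp : 1 < p) (n n' : ℕ) :
    (∃ e : cohRing p n ≃+* cohRing p n',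
        (degTwo p n).map e.toRingHom.toIntAlgHom.toLinearMap = degTwo p n') ↔ n' = n := by
  constructor
  · rintro ⟨e, he⟩
    -- coefficients of the images of the generators
    have hxmem : (Ideal.Quotient.mk _ (X 0) : cohRing p n) ∈ degTwo p n :=
      Submodule.subset_span (Set.mem_insert _ _)
    have hymem : (Ideal.Quotient.mk _ (X 1) : cohRing p n) ∈ degTwo p n :=
      Submodule.subset_span (Set.mem_insert_iff.mpr (Or.inr rfl))
    obtain ⟨a, b, hab⟩ := Submodule.mem_span_pair.mp
      (show e (Ideal.Quotient.mk _ (X 0)) ∈ degTwo p n' from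
        he ▸ Submodule.mem_map_of_mem (f := e.toRingHom.toIntAlgHom.toLinearMap) hxmem)
    obtain ⟨c, d, hcd⟩ := Submodule.mem_span_pair.mp
      (show e (Ideal.Quotient.mk _ (X 1)) ∈ degTwo p n' from
        he ▸ Submodule.mem_map_of_mem (f := e.toRingHom.toIntAlgHom.toLinearMap) hymem)
    obtain ⟨s, hs, hes⟩ := (show (Ideal.Quotient.mk _ (X 0) : cohRing p n')
        ∈ (degTwo p n).map e.toRingHom.toIntAlgHom.toLinearMap from
      he.symm ▸ Submodule.subset_span (Set.mem_insert _ _))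
    obtain ⟨a₁, b₁, hs'⟩ := Submodule.mem_span_pair.mp hs
    obtain ⟨t, ht, het⟩ := (show (Ideal.Quotient.mk _ (X 1) : cohRing p n')
        ∈ (degTwo p n).map e.toRingHom.toIntAlgHom.toLinearMap from
      he.symm ▸ Submodule.subset_span (Set.mem_insert_iff.mpr (Or.inr rfl)))
    obtain ⟨c₁, d₁, ht'⟩ := Submodule.mem_span_pair.mp ht
    -- pass to the model
    have hu : φ p n' (e (Ideal.Quotient.mk _ (X 0)))
        = a • tB p n' + b • yB p n' := by
      erw [← hab, map_add, map_zsmul, map_zsmul, φ_x, φ_y]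
    have hv : φ p n' (e (Ideal.Quotient.mk _ (X 1)))
        = c • tB p n' + d • yB p n' := by
      erw [← hcd, map_add, map_zsmul, map_zsmul, φ_x, φ_y]
    -- the four determinant equations
    have heqx : a₁ • φ p n' (e (Ideal.Quotient.mk _ (X 0)))
        + b₁ • φ p n' (e (Ideal.Quotient.mk _ (X 1))) = tB p n' := by
      have h0 : φ p n' (e s) = tB p n' := by
        rw [show e s = e.toRingHom.toIntAlgHom.toLinearMap s from rfl, hes, φ_x]
      rw [← hs'] at h0
      erw [map_add, map_zsmul, map_zsmul, map_add, map_zsmul, map_zsmul] at h0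
      exact h0
    have heqy : c₁ • φ p n' (e (Ideal.Quotient.mk _ (X 0)))
        + d₁ • φ p n' (e (Ideal.Quotient.mk _ (X 1))) = yB p n' := by
      have h0 : φ p n' (e t) = yB p n' := by
        rw [show e t = e.toRingHom.toIntAlgHom.toLinearMap t from rfl, het, φ_y]
      rw [← ht'] at h0
      erw [map_add, map_zsmul, map_zsmul, map_add, map_zsmul, map_zsmul] at h0
      exact h0
    rw [hu, hv] at heqx heqy
    have hx4 : (a₁ * a + b₁ * c - 1) • (tB p n' ^ 1 * yB p n' ^ 0)
        + (a₁ * b + b₁ * d) • (tB p n' ^ 0 * yB p n' ^ 1) = 0 := by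
      simp only [zsmul_eq_mul] at heqx ⊢
      push_cast
      linear_combination heqx
    have hy4 : (c₁ * a + d₁ * c) • (tB p n' ^ 1 * yB p n' ^ 0)
        + (c₁ * b + d₁ * d - 1) • (tB p n' ^ 0 * yB p n' ^ 1) = 0 := by
      simp only [zsmul_eq_mul] at heqy ⊢
      push_cast
      linear_combination heqy
    obtain ⟨h1, h2⟩ := indep_two p n' (by omega) (by omega) (by omega) (by omega)
      (by left; omega) hx4
    obtain ⟨h3, h4⟩ := indep_two p n' (by omega) (by omega) (by omega) (by omega)
      (by left; omega) hy4
    have hdet : (a * d - b * c) * (a₁ * d₁ - b₁ * c₁) = 1 := by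
      linear_combination (c₁ * b + d₁ * d) * h1 - (c₁ * a + d₁ * c) * h2 + h4
    -- the two relations, transported through `e` and `φ`
    have hrel1 : (a • tB p n' + b • yB p n') ^ (p + 1) = 0 := by
      have h0 : (Ideal.Quotient.mk _ (X 0) : cohRing p n) ^ (p + 1) = 0 := by
        rw [← map_pow]
        exact Ideal.Quotient.eq_zero_iff_mem.mpr
          (Ideal.subset_span (Set.mem_insert _ _))
      have h1 := congrArg (φ p n') (congrArg e h0)
      erw [map_pow, map_pow, map_zero, map_zero, hu] at h1
      exact h1
    have hrel2 : (c • tB p n' + d • yB p n')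
        * ((n : Bmod p n') * (a • tB p n' + b • yB p n')
          + (c • tB p n' + d • yB p n')) = 0 := by
      have h0' : (Ideal.Quotient.mk _ (X 1 * ((n : MvPolynomial (Fin 2) ℤ) * X 0 + X 1))
          : cohRing p n) = 0 :=
        Ideal.Quotient.eq_zero_iff_mem.mpr
          (Ideal.subset_span (Set.mem_insert_iff.mpr (Or.inr rfl)))
      have h1 := congrArg (φ p n') (congrArg e h0')
      erw [map_mul, map_mul, map_add, map_add, map_mul, map_mul] at h1
      erw [map_add, map_mul, map_natCast, map_mul, map_natCast, map_zero, map_zero] at h1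
      rw [hu, hv] at h1
      exact h1
    -- extract the scalar equations
    have hG : gSeq a b (n' : ℤ) (p + 1) = 0 := by
      refine indep_one p n' (le_refl p) (le_refl 1) (i := p) (j := 1) ?_
      have hpf := pow_formula p n' a b p
      rw [hrel1, tB_pow, smul_zero, zero_add] at hpf
      rw [pow_one, ← hpf]
    have h23 : (c * ((n : ℤ) * a + c)) • (tB p n' ^ 2 * yB p n' ^ 0)
        + (c * ((n : ℤ) * b + d) + d * ((n : ℤ) * a + c)
            - (n' : ℤ) * (d * ((n : ℤ) * b + d))) • (tB p n' ^ 1 * yB p n' ^ 1) = 0 := by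
      have hyy := yB_rel p n'
      simp only [zsmul_eq_mul] at hrel2 ⊢
      push_cast
      linear_combination hrel2 - ((d : Bmod p n') * ((n : Bmod p n') * (b : Bmod p n')
        + (d : Bmod p n'))) * hyy
    obtain ⟨hE2, hE3⟩ := indep_two p n' (by omega) (by omega) (by omega) (by omega)
      (by left; omega) h23
    exact keyArith p n n' a b c d (a₁ * d₁ - b₁ * c₁) hdet hG hE2 hE3
  · rintro rfl
    refine ⟨RingEquiv.refl _, ?_⟩
    rw [show (RingEquiv.refl (cohRing p n')).toRingHom.toIntAlgHom.toLinearMap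
        = LinearMap.id from rfl, Submodule.map_id]
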